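/- Let f : ℝⁿ → ℝⁿ be twice continuously differentiable with Df(x₀) invertible, M = ‖(Df(x₀))⁻¹‖, and K an upper bound on ‖D²f‖ over B(x₀,R). Let W ⊂ ℝⁿ be a linear subspace and M_W = sup{‖(Df(x₀))⁻¹ w‖ : w ∈ W, ‖w‖ ≤ 1}. Then for any 0 < r_x < min{1/(MK), R} and r_W = r_x(2 − r_x M K)/(2 M_W), for each y with y − f(x₀) ∈ W and ‖y − f(x₀)‖ < r_W, there exists a unique x_y ∈ B(x₀, r_x) with f(x_y) = y. -/

import Mathlib

open Metric Set

private lemma quad_bound {E F : Type*} [NormedAddCommGroup E] [NormedSpace ℝ E]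
    [NormedAddCommGroup F] [NormedSpace ℝ F]
    {h : E → F} (hd : Differentiable ℝ h) (x₀ x : E) {C : ℝ}
    (hC : ∀ t ∈ Set.Icc (0:ℝ) 1, ‖fderiv ℝ h (x₀ + t • (x - x₀))‖ ≤ C * (t * ‖x - x₀‖)) :
    ‖h x - h x₀‖ ≤ C / 2 * ‖x - x₀‖ ^ 2 := by
  set v := x - x₀ with hv
  have hline : ∀ t : ℝ, HasDerivAt (fun t : ℝ => x₀ + t • v) v t := by
    intro t
    simpa using ((hasDerivAt_id t).smul_const v).const_add x₀
  set φ : ℝ → F := fun t => h (x₀ + t • v) - h x₀ with hφ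
  set φ' : ℝ → F := fun t => fderiv ℝ h (x₀ + t • v) v with hφ'
  have hφd : ∀ t : ℝ, HasDerivAt φ (φ' t) t := by
    intro t
    exact ((hd _).hasFDerivAt.comp_hasDerivAt t (hline t)).sub_const (h x₀)
  have hB : ∀ t : ℝ, HasDerivAt (fun t : ℝ => C * ‖v‖ ^ 2 / 2 * t ^ 2) (C * ‖v‖ ^ 2 * t) t := by
    intro t
    have h1 := (hasDerivAt_pow 2 t).const_mul (C * ‖v‖ ^ 2 / 2)
    convert h1 using 1
    exacts [rfl, rfl, by push_cast; ring]
  have key := image_norm_le_of_norm_deriv_right_le_deriv_boundary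
    (f := φ) (a := 0) (b := 1) (f' := φ')
    (fun t _ => (hφd t).continuousAt.continuousWithinAt)
    (fun t _ => (hφd t).hasDerivWithinAt)
    (B := fun t => C * ‖v‖ ^ 2 / 2 * t ^ 2) (B' := fun t => C * ‖v‖ ^ 2 * t)
    (by simp [φ]) hB
    (fun t ht => by
      have h1 : ‖φ' t‖ ≤ ‖fderiv ℝ h (x₀ + t • v)‖ * ‖v‖ :=
        (fderiv ℝ h (x₀ + t • v)).le_opNorm v
      have h2 := mul_le_mul_of_nonneg_right (hC t ⟨ht.1, ht.2.le⟩) (norm_nonneg v)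
      calc ‖φ' t‖ ≤ C * (t * ‖v‖) * ‖v‖ := h1.trans h2
        _ = C * ‖v‖ ^ 2 * t := by ring)
  have h1 := key (x := 1) ⟨zero_le_one, le_rfl⟩
  have : φ 1 = h x - h x₀ := by simp [φ, hv]
  rw [this] at h1
  calc ‖h x - h x₀‖ ≤ C * ‖v‖ ^ 2 / 2 * 1 ^ 2 := h1
    _ = C / 2 * ‖v‖ ^ 2 := by ring

/-- Directional quantitative inverse function theorem (Proposition 3.11 of the paper):
perturbations of `f x₀` along a subspace `W` of size `< r_W = r_x(2 − r_x M K)/(2 M_W)`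
have a unique preimage in `B(x₀, r_x)`. -/
theorem statement_8 {n : ℕ}
    {f : (Fin n → ℝ) → (Fin n → ℝ)} (hf : ContDiff ℝ 2 f)
    {x₀ : Fin n → ℝ}
    (A : (Fin n → ℝ) ≃L[ℝ] (Fin n → ℝ))
    (hA : (A : (Fin n → ℝ) →L[ℝ] (Fin n → ℝ)) = fderiv ℝ f x₀)
    (M : ℝ) (hM : M = ‖(A.symm : (Fin n → ℝ) →L[ℝ] (Fin n → ℝ))‖)
    (R : ℝ) (hR : 0 < R)
    (K : ℝ)
    (hK : ∀ x ∈ ball x₀ R, ∀ u v : Fin n → ℝ,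
      ‖fderiv ℝ (fderiv ℝ f) x u v‖ ≤ K * ‖u‖ * ‖v‖)
    (W : Submodule ℝ (Fin n → ℝ))
    (MW : ℝ) (hMW : 0 < MW)
    (hMWbound : ∀ w ∈ W, ‖A.symm w‖ ≤ MW * ‖w‖)
    (rx rW : ℝ) (hrx : 0 < rx) (hrx' : rx < min (1 / (M * K)) R)
    (hrW : rW = rx * (2 - rx * M * K) / (2 * MW)) :
    ∀ y : Fin n → ℝ, y - f x₀ ∈ W → ‖y - f x₀‖ < rW →
      ∃! x, x ∈ ball x₀ rx ∧ f x = y := by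
  intro y hyW hyr
  have hrx1 : rx < 1 / (M * K) := hrx'.trans_le (min_le_left _ _)
  have hrxR : rx < R := hrx'.trans_le (min_le_right _ _)
  have hMnn : 0 ≤ M := hM ▸ norm_nonneg _
  have hMK : 0 < M * K := by
    by_contra hle
    push_neg at hle
    have : 1 / (M * K) ≤ 0 := one_div_nonpos.mpr hle
    linarith
  have hM0 : 0 < M := by
    rcases hMnn.lt_or_eq with h | h
    · exact h
    · exfalso; rw [← h] at hMK; simp at hMK
  have hK0 : 0 < K := by nlinarith
  have hrxMK : rx * (M * K) < 1 := by
    rw [lt_div_iff₀ hMK] at hrx1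
    linarith
  -- f is differentiable, and so is its derivative
  have hfd : Differentiable ℝ f := hf.differentiable (by norm_num)
  have hfd2 : Differentiable ℝ (fderiv ℝ f) :=
    (hf.fderiv_right (m := 1) (by norm_num)).differentiable (by norm_num)
  -- operator norm bound on the second derivative
  have hK' : ∀ x ∈ ball x₀ R, ‖fderiv ℝ (fderiv ℝ f) x‖ ≤ K := by
    intro x hx
    refine ContinuousLinearMap.opNorm_le_bound _ hK0.le fun u => ?_
    refine ContinuousLinearMap.opNorm_le_bound _ (by positivity) fun v => ?_
    calc ‖fderiv ℝ (fderiv ℝ f) x u v‖ ≤ K * ‖u‖ * ‖v‖ := hK x hx u v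
      _ = K * ‖u‖ * ‖v‖ := rfl
  -- first derivative is K-Lipschitz w.r.t. x₀ on the ball of radius R
  have hLip1 : ∀ x ∈ ball x₀ R, ‖fderiv ℝ f x - fderiv ℝ f x₀‖ ≤ K * ‖x - x₀‖ := by
    intro x hx
    exact (convex_ball x₀ R).norm_image_sub_le_of_norm_fderiv_le
      (fun z _ => hfd2 z) hK' (mem_ball_self hR) hx
  -- the Newton map g
  set g : (Fin n → ℝ) → (Fin n → ℝ) := fun x => x + A.symm (y - f x) with hg
  set D : (Fin n → ℝ) → (Fin n → ℝ) →L[ℝ] (Fin n → ℝ) :=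
    fun z => (A.symm : (Fin n → ℝ) →L[ℝ] (Fin n → ℝ)) ∘L
      ((A : (Fin n → ℝ) →L[ℝ] (Fin n → ℝ)) - fderiv ℝ f z) with hD
  have hgD : ∀ z, HasFDerivAt g (D z) z := by
    intro z
    have h1 : HasFDerivAt (fun x => A.symm (y - f x))
        ((A.symm : (Fin n → ℝ) →L[ℝ] (Fin n → ℝ)) ∘L
          ((0 : (Fin n → ℝ) →L[ℝ] (Fin n → ℝ)) - fderiv ℝ f z)) z :=
      A.symm.hasFDerivAt.comp z ((hasFDerivAt_const y z).sub (hfd z).hasFDerivAt)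
    have h2 := (hasFDerivAt_id z).add h1
    refine h2.congr_fderiv ?_
    ext v
    simp [D, ContinuousLinearMap.sub_apply, map_sub, sub_eq_add_neg]
  -- bound on the derivative of g
  have hDb : ∀ z ∈ closedBall x₀ rx, ‖D z‖ ≤ M * K * ‖z - x₀‖ := by
    intro z hz
    have hzR : z ∈ ball x₀ R := by
      rw [mem_closedBall] at hz
      exact mem_ball.mpr (hz.trans_lt hrxR)
    calc ‖D z‖ ≤ ‖(A.symm : (Fin n → ℝ) →L[ℝ] (Fin n → ℝ))‖ *
          ‖(A : (Fin n → ℝ) →L[ℝ] (Fin n → ℝ)) - fderiv ℝ f z‖ :=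
        ContinuousLinearMap.opNorm_comp_le _ _
      _ ≤ M * (K * ‖z - x₀‖) := by
          rw [← hM]
          apply mul_le_mul_of_nonneg_left _ hMnn
          rw [hA, ← norm_sub_rev]
          exact hLip1 z hzR
      _ = M * K * ‖z - x₀‖ := by ring
  have hgdiff : Differentiable ℝ g := fun z => (hgD z).differentiableAt
  have hfderivg : ∀ z, fderiv ℝ g z = D z := fun z => (hgD z).fderiv
  -- Lipschitz estimate on the closed ball
  have hLipg : ∀ a ∈ closedBall x₀ rx, ∀ b ∈ closedBall x₀ rx,
      ‖g a - g b‖ ≤ M * K * rx * ‖a - b‖ := by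
    intro a ha b hb
    refine (convex_closedBall x₀ rx).norm_image_sub_le_of_norm_fderiv_le
      (fun z _ => hgdiff z) (fun z hz => ?_) hb ha
    rw [hfderivg]
    calc ‖D z‖ ≤ M * K * ‖z - x₀‖ := hDb z hz
      _ ≤ M * K * rx := by
          apply mul_le_mul_of_nonneg_left _ hMK.le
          rw [← dist_eq_norm]; exact mem_closedBall.mp hz
  -- quadratic estimate
  have hquad : ∀ x ∈ closedBall x₀ rx, ‖g x - g x₀‖ ≤ M * K / 2 * ‖x - x₀‖ ^ 2 := by
    intro x hx
    apply quad_bound hgdiff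
    intro t ht
    have hmem : x₀ + t • (x - x₀) ∈ closedBall x₀ rx := by
      rw [mem_closedBall, dist_eq_norm]
      have : x₀ + t • (x - x₀) - x₀ = t • (x - x₀) := by abel
      rw [this, norm_smul, Real.norm_eq_abs, abs_of_nonneg ht.1]
      have hxn : ‖x - x₀‖ ≤ rx := by rw [← dist_eq_norm]; exact mem_closedBall.mp hx
      calc t * ‖x - x₀‖ ≤ 1 * ‖x - x₀‖ := mul_le_mul_of_nonneg_right ht.2 (norm_nonneg _)
        _ ≤ rx := by linarith
    rw [hfderivg]
    calc ‖D (x₀ + t • (x - x₀))‖ ≤ M * K * ‖x₀ + t • (x - x₀) - x₀‖ := hDb _ hmem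
      _ = M * K * (t * ‖x - x₀‖) := by
          congr 1
          have : x₀ + t • (x - x₀) - x₀ = t • (x - x₀) := by abel
          rw [this, norm_smul, Real.norm_eq_abs, abs_of_nonneg ht.1]
  -- g maps the closed ball into the open ball
  have hgx₀ : ‖g x₀ - x₀‖ < rx * (2 - rx * M * K) / 2 := by
    have h1 : g x₀ - x₀ = A.symm (y - f x₀) := by simp [g]
    rw [h1]
    calc ‖A.symm (y - f x₀)‖ ≤ MW * ‖y - f x₀‖ := hMWbound _ hyW
      _ < MW * rW := by exact mul_lt_mul_of_pos_left hyr hMW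
      _ = rx * (2 - rx * M * K) / 2 := by
          rw [hrW]; field_simp
  have hmaps : ∀ x ∈ closedBall x₀ rx, g x ∈ ball x₀ rx := by
    intro x hx
    rw [mem_ball, dist_eq_norm]
    have hxn : ‖x - x₀‖ ≤ rx := by rw [← dist_eq_norm]; exact mem_closedBall.mp hx
    calc ‖g x - x₀‖ ≤ ‖g x - g x₀‖ + ‖g x₀ - x₀‖ := norm_sub_le_norm_sub_add_norm_sub _ _ _
      _ < M * K / 2 * ‖x - x₀‖ ^ 2 + rx * (2 - rx * M * K) / 2 :=
          add_lt_add_of_le_of_lt (hquad x hx) hgx₀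
      _ ≤ M * K / 2 * rx ^ 2 + rx * (2 - rx * M * K) / 2 := by
          have h2 : ‖x - x₀‖ ^ 2 ≤ rx ^ 2 := by nlinarith [norm_nonneg (x - x₀)]
          nlinarith [hMK, h2]
      _ = rx := by ring
  have hmapsTo : MapsTo g (closedBall x₀ rx) (closedBall x₀ rx) :=
    fun x hx => ball_subset_closedBall (hmaps x hx)
  -- contraction
  set κ : NNReal := ⟨M * K * rx, by positivity⟩ with hκ
  have hκ1 : κ < 1 := by
    rw [← NNReal.coe_lt_coe]
    show M * K * rx < (1:ℝ)
    linarith [hrxMK]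
  have hcontr : ContractingWith κ (hmapsTo.restrict g _ _) := by
    refine ⟨hκ1, LipschitzWith.of_dist_le_mul fun a b => ?_⟩
    have := hLipg a a.2 b b.2
    rw [Subtype.dist_eq, Subtype.dist_eq, dist_eq_norm, dist_eq_norm]
    exact this
  have hsc : IsComplete (closedBall x₀ rx) := isClosed_closedBall.isComplete
  have hx₀s : x₀ ∈ closedBall x₀ rx := mem_closedBall_self hrx.le
  obtain ⟨xs, hxs, hfix, -, -⟩ :=
    hcontr.exists_fixedPoint' hsc hmapsTo hx₀s (edist_ne_top _ _)
  -- the fixed point solves f x = y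
  have hfixg : g xs = xs := hfix
  have hxball : xs ∈ ball x₀ rx := by
    rw [← hfixg]; exact hmaps xs hxs
  have hfxs : f xs = y := by
    have h1 : A.symm (y - f xs) = 0 := by
      have : xs + A.symm (y - f xs) = xs := hfixg
      linear_combination (norm := module) this
    have h2 : y - f xs = 0 := by
      have := A.symm.injective (a₁ := y - f xs) (a₂ := 0) (by simpa using h1)
      exact this
    linear_combination (norm := module) -h2
  refine ⟨xs, ⟨hxball, hfxs⟩, ?_⟩
  rintro x' ⟨hx'ball, hfx'⟩
  -- uniqueness: both are fixed points of the contraction g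
  have hx'fix : g x' = x' := by simp [g, hfx']
  have hd : ‖x' - xs‖ ≤ M * K * rx * ‖x' - xs‖ := by
    have := hLipg x' (ball_subset_closedBall hx'ball) xs hxs
    rwa [hx'fix, hfixg] at this
  have : ‖x' - xs‖ = 0 := by nlinarith [norm_nonneg (x' - xs)]
  have := sub_eq_zero.mp (norm_eq_zero.mp this)
  exact this
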